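/- arXiv:1405.6513 — 4 statements merged into one kernel-verified Lean document; each statement's English description precedes it below -/
import Mathlib

section
/- Let n be even and n' ≥ 1; set S = {1,…,n} × {1,…,n'}. Let β_1 > β_2 > ⋯ > β_n be rationals with β_{n+1−i} = −β_i, and β'_1 > ⋯ > β'_{n'} rationals with β'_{n'+1−j} = −β'_j. Assume β_i + β'_j ≠ 0 for all (i,j) ∈ S. Set p̃ := min{ |β_i − β'_j| : (i,j) ∈ S, β_i ≥ 0, β'_j ≥ 0 }, and let d̃, d̃' be rationals with ã := d̃ − d̃'. Define b̃_i := β_i + d̃ (1 ≤ i ≤ n) and b̃_{n+j} := β'_j + d̃' (1 ≤ j ≤ n'). If |ã| < p̃, then #{ (i,j) ∈ S : b̃_i < b̃_{n+j} } = nn'/2. -/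
/-- Lemma 'Laenge' (a) of Appendix 1: with `n` even, antisymmetric strictly
decreasing `β`, `β'`, disjointness `β_i + β'_j ≠ 0`, minimal gap `p̃`, and
`|ã| < p̃` for `ã = d̃ − d̃'`, the number of pairs `(i,j)` with
`β_i + d̃ < β'_j + d̃'` is exactly `nn'/2`. -/
theorem stmt_8 (n n' : ℕ) (hn : 0 < n) (hne : Even n) (hn' : 0 < n')
    (β β' : ℕ → ℚ) (dt dt' p : ℚ)
    (hβdec : ∀ i, 1 ≤ i → i < n → β (i + 1) < β i)
    (hβ'dec : ∀ j, 1 ≤ j → j < n' → β' (j + 1) < β' j)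
    (hβsym : ∀ i, 1 ≤ i → i ≤ n → β (n + 1 - i) = -β i)
    (hβ'sym : ∀ j, 1 ≤ j → j ≤ n' → β' (n' + 1 - j) = -β' j)
    (hdisj : ∀ i j, 1 ≤ i → i ≤ n → 1 ≤ j → j ≤ n' → β i + β' j ≠ 0)
    (hp1 : ∀ i j, 1 ≤ i → i ≤ n → 1 ≤ j → j ≤ n' →
      0 ≤ β i → 0 ≤ β' j → p ≤ |β i - β' j|)
    (hp2 : ∃ i j, 1 ≤ i ∧ i ≤ n ∧ 1 ≤ j ∧ j ≤ n' ∧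
      0 ≤ β i ∧ 0 ≤ β' j ∧ p = |β i - β' j|)
    (ha : |dt - dt'| < p) :
    ((Finset.Icc 1 n ×ˢ Finset.Icc 1 n').filter
        (fun q : ℕ × ℕ => β q.1 + dt < β' q.2 + dt')).card = n * n' / 2 := by
  classical
  obtain ⟨ha1, ha2⟩ := abs_lt.mp ha
  -- gap lemma: p ≤ |β i - β' j| for all valid pairs
  have gap : ∀ i j, 1 ≤ i → i ≤ n → 1 ≤ j → j ≤ n' → p ≤ |β i - β' j| := by
    intro i j hi1 hin hj1 hjn
    have hi1' : 1 ≤ n + 1 - i := by omega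
    have hin' : n + 1 - i ≤ n := by omega
    have hj1' : 1 ≤ n' + 1 - j := by omega
    have hjn' : n' + 1 - j ≤ n' := by omega
    have hsi := hβsym i hi1 hin
    have hsj := hβ'sym j hj1 hjn
    rcases le_or_gt 0 (β i) with hbi | hbi
    · rcases le_or_gt 0 (β' j) with hbj | hbj
      · exact hp1 i j hi1 hin hj1 hjn hbi hbj
      · have hbj' : 0 ≤ β' (n' + 1 - j) := by rw [hsj]; linarith
        have h := hp1 i (n' + 1 - j) hi1 hin hj1' hjn' hbi hbj'
        rw [hsj] at h
        rw [abs_of_nonneg (show (0:ℚ) ≤ β i - β' j by linarith)]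
        rcases le_abs.mp h with h2 | h2 <;> linarith
    · rcases le_or_gt 0 (β' j) with hbj | hbj
      · have hbi' : 0 ≤ β (n + 1 - i) := by rw [hsi]; linarith
        have h := hp1 (n + 1 - i) j hi1' hin' hj1 hjn hbi' hbj
        rw [hsi] at h
        rw [abs_of_nonpos (show β i - β' j ≤ 0 by linarith)]
        rcases le_abs.mp h with h2 | h2 <;> linarith
      · have hbi' : 0 ≤ β (n + 1 - i) := by rw [hsi]; linarith
        have hbj' : 0 ≤ β' (n' + 1 - j) := by rw [hsj]; linarith
        have h := hp1 (n + 1 - i) (n' + 1 - j) hi1' hin' hj1' hjn' hbi' hbj'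
        rw [hsi, hsj] at h
        rwa [show -β i - -β' j = -(β i - β' j) by ring, abs_neg] at h
  set S := Finset.Icc 1 n ×ˢ Finset.Icc 1 n' with hS
  set cond := fun q : ℕ × ℕ => β q.1 + dt < β' q.2 + dt' with hcond
  have hmem : ∀ q ∈ S, 1 ≤ q.1 ∧ q.1 ≤ n ∧ 1 ≤ q.2 ∧ q.2 ≤ n' := by
    intro q hq
    simp only [hS, Finset.mem_product, Finset.mem_Icc] at hq
    exact ⟨hq.1.1, hq.1.2, hq.2.1, hq.2.2⟩
  have swap : ∀ q ∈ S, cond (n + 1 - q.1, n' + 1 - q.2) ↔ ¬ cond q := by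
    intro q hq
    obtain ⟨h1, h2, h3, h4⟩ := hmem q hq
    have hgap := gap q.1 q.2 h1 h2 h3 h4
    simp only [hcond, hβsym q.1 h1 h2, hβ'sym q.2 h3 h4, not_lt]
    rcases le_abs.mp hgap with h5 | h5 <;>
      (constructor <;> intro h <;> linarith)
  have hφS : ∀ q ∈ S, (n + 1 - q.1, n' + 1 - q.2) ∈ S := by
    intro q hq
    obtain ⟨h1, h2, h3, h4⟩ := hmem q hq
    simp only [hS, Finset.mem_product, Finset.mem_Icc]
    omega
  have hcardeq : (S.filter cond).card = (S.filter (fun q => ¬ cond q)).card := by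
    apply Finset.card_bij' (fun q _ => (n + 1 - q.1, n' + 1 - q.2))
      (fun q _ => (n + 1 - q.1, n' + 1 - q.2))
    · intro q hq
      rw [Finset.mem_filter] at hq ⊢
      exact ⟨hφS q hq.1, fun hc => (swap q hq.1).mp hc hq.2⟩
    · intro q hq
      rw [Finset.mem_filter] at hq ⊢
      exact ⟨hφS q hq.1, (swap q hq.1).mpr hq.2⟩
    · intro q hq
      obtain ⟨h1, h2, h3, h4⟩ := hmem q (Finset.mem_filter.mp hq).1
      have : n + 1 - (n + 1 - q.1) = q.1 := by omega
      have : n' + 1 - (n' + 1 - q.2) = q.2 := by omega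
      ext <;> simp_all
    · intro q hq
      obtain ⟨h1, h2, h3, h4⟩ := hmem q (Finset.mem_filter.mp hq).1
      have : n + 1 - (n + 1 - q.1) = q.1 := by omega
      have : n' + 1 - (n' + 1 - q.2) = q.2 := by omega
      ext <;> simp_all
  have htot : (S.filter cond).card + (S.filter (fun q => ¬ cond q)).card = S.card :=
    Finset.card_filter_add_card_filter_not cond
  have hScard : S.card = n * n' := by
    rw [hS, Finset.card_product, Nat.card_Icc, Nat.card_Icc]
    simp
  have key : (S.filter cond).card = n * n' / 2 := by omega
  exact key
end

section
/- With notation as follows: n even, n' ≥ 1, S = {1,…,n}×{1,…,n'}, rationals β_1 > ⋯ > β_n with β_{n+1−i} = −β_i, rationals β'_1 > ⋯ > β'_{n'} with β'_{n'+1−j} = −β'_j, all β_i + β'_j ≠ 0, p̃ = min{|β_i − β'_j| : β_i ≥ 0, β'_j ≥ 0}, ã = d̃ − d̃', b̃_i = β_i + d̃, b̃_{n+j} = β'_j + d̃'. Then: (b) if ã > p̃ then #{(i,j) ∈ S : b̃_i < b̃_{n+j}} < nn'/2; and (c) if ã < −p̃ then #{(i,j) ∈ S : b̃_i < b̃_{n+j}}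 > nn'/2. -/
/-- Auxiliary involution on the index set. -/
def invol (n n' : ℕ) (q : ℕ × ℕ) : ℕ × ℕ := (n + 1 - q.1, n' + 1 - q.2)

/-- Lemma 'Laenge' (b) and (c) of Appendix 1: in the same setting as part (a),
if `ã > p̃` then the inversion count is `< nn'/2`, and if `ã < −p̃` it is
`> nn'/2`. -/
theorem stmt_9 (n n' : ℕ) (hn : 0 < n) (hne : Even n) (hn' : 0 < n')
    (β β' : ℕ → ℚ) (dt dt' p : ℚ)
    (hβdec : ∀ i, 1 ≤ i → i < n → β (i + 1) < β i)
    (hβ'dec : ∀ j, 1 ≤ j → j < n' → β' (j + 1) < β' j)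
    (hβsym : ∀ i, 1 ≤ i → i ≤ n → β (n + 1 - i) = -β i)
    (hβ'sym : ∀ j, 1 ≤ j → j ≤ n' → β' (n' + 1 - j) = -β' j)
    (hdisj : ∀ i j, 1 ≤ i → i ≤ n → 1 ≤ j → j ≤ n' → β i + β' j ≠ 0)
    (hp1 : ∀ i j, 1 ≤ i → i ≤ n → 1 ≤ j → j ≤ n' →
      0 ≤ β i → 0 ≤ β' j → p ≤ |β i - β' j|)
    (hp2 : ∃ i j, 1 ≤ i ∧ i ≤ n ∧ 1 ≤ j ∧ j ≤ n' ∧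
      0 ≤ β i ∧ 0 ≤ β' j ∧ p = |β i - β' j|) :
    (p < dt - dt' →
      ((Finset.Icc 1 n ×ˢ Finset.Icc 1 n').filter
        (fun q : ℕ × ℕ => β q.1 + dt < β' q.2 + dt')).card < n * n' / 2) ∧
    (dt - dt' < -p →
      n * n' / 2 < ((Finset.Icc 1 n ×ˢ Finset.Icc 1 n').filter
        (fun q : ℕ × ℕ => β q.1 + dt < β' q.2 + dt')).card) := by
  obtain ⟨i0, j0, hi01, hi0n, hj01, hj0n, hbi0, hbj0, hpeq⟩ := hp2
  have hp0 : 0 ≤ p := hpeq ▸ abs_nonneg _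
  have habs : -p ≤ β i0 - β' j0 ∧ β i0 - β' j0 ≤ p := abs_le.mp hpeq.ge
  obtain ⟨r, hr⟩ := hne
  set S := Finset.Icc 1 n ×ˢ Finset.Icc 1 n' with hSdef
  set A := S.filter (fun q : ℕ × ℕ => β q.1 + dt < β' q.2 + dt') with hAdef
  set B := S.filter (fun q : ℕ × ℕ => ¬ (β q.1 + dt < β' q.2 + dt')) with hBdef
  have hmemS : ∀ q : ℕ × ℕ, q ∈ S ↔ (1 ≤ q.1 ∧ q.1 ≤ n) ∧ 1 ≤ q.2 ∧ q.2 ≤ n' := by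
    intro q; simp [hSdef, Finset.mem_product, Finset.mem_Icc]
  have hcardS : S.card = n * n' := by
    rw [hSdef, Finset.card_product, Nat.card_Icc, Nat.card_Icc]; simp
  have hAB : A.card + B.card = n * n' := by
    rw [hAdef, hBdef, Finset.card_filter_add_card_filter_not, hcardS]
  have hfS : ∀ q ∈ S, invol n n' q ∈ S := by
    intro q hq; rw [hmemS] at hq ⊢; simp only [invol]; omega
  have hff : ∀ q ∈ S, invol n n' (invol n n' q) = q := by
    intro q hq; rw [hmemS] at hq
    simp only [invol, Prod.ext_iff]; omega
  have hβf : ∀ q ∈ S, β (invol n n' q).1 = -β q.1 := by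
    intro q hq; rw [hmemS] at hq; exact hβsym q.1 hq.1.1 hq.1.2
  have hβ'f : ∀ q ∈ S, β' (invol n n' q).2 = -β' q.2 := by
    intro q hq; rw [hmemS] at hq; exact hβ'sym q.2 hq.2.1 hq.2.2
  have hq0S : (i0, j0) ∈ S := by rw [hmemS]; exact ⟨⟨hi01, hi0n⟩, hj01, hj0n⟩
  have hfq0S : invol n n' (i0, j0) ∈ S := hfS _ hq0S
  have hq0ne : (i0, j0) ≠ invol n n' (i0, j0) := by
    intro h
    have := congrArg Prod.fst h
    simp only [invol] at this
    omega
  have hβq0 : β (invol n n' (i0, j0)).1 = -β i0 := hβf _ hq0S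
  have hβ'q0 : β' (invol n n' (i0, j0)).2 = -β' j0 := hβ'f _ hq0S
  have hinjS : ∀ a ∈ S, ∀ b ∈ S, invol n n' a = invol n n' b → a = b := by
    intro a ha b hb h
    rw [← hff a ha, h, hff b hb]
  constructor
  · -- part (b): p < dt - dt'
    intro ha
    -- the set insert q0 (insert (invol q0) (A.image invol)) is inside B
    have hq0notA : ¬ (β i0 + dt < β' j0 + dt') := by
      have := habs.1; intro h; linarith
    have hfq0notA : ¬ (β (invol n n' (i0, j0)).1 + dt < β' (invol n n' (i0, j0)).2 + dt') := by
      rw [hβq0, hβ'q0]; have := habs.2; intro h; linarith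
    have hq0B : (i0, j0) ∈ B := by
      rw [hBdef, Finset.mem_filter]; exact ⟨hq0S, hq0notA⟩
    have hfq0B : invol n n' (i0, j0) ∈ B := by
      rw [hBdef, Finset.mem_filter]; exact ⟨hfq0S, hfq0notA⟩
    have himage : A.image (invol n n') ⊆ B := by
      intro q' hq'
      obtain ⟨q, hqA, rfl⟩ := Finset.mem_image.mp hq'
      rw [hAdef, Finset.mem_filter] at hqA
      obtain ⟨hqS, hqc⟩ := hqA
      rw [hBdef, Finset.mem_filter]
      refine ⟨hfS q hqS, ?_⟩
      rw [hβf q hqS, hβ'f q hqS]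
      intro h; linarith
    have hsub : insert (i0, j0) (insert (invol n n' (i0, j0)) (A.image (invol n n'))) ⊆ B := by
      rw [Finset.insert_subset_iff, Finset.insert_subset_iff]
      exact ⟨hq0B, hfq0B, himage⟩
    have hfq0notim : invol n n' (i0, j0) ∉ A.image (invol n n') := by
      intro h
      obtain ⟨q, hqA, heq⟩ := Finset.mem_image.mp h
      rw [hAdef, Finset.mem_filter] at hqA
      have : q = (i0, j0) := hinjS q hqA.1 _ hq0S heq
      rw [this] at hqA
      exact hq0notA hqA.2
    have hq0notim : (i0, j0) ∉ insert (invol n n' (i0, j0)) (A.image (invol n n')) := by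
      rw [Finset.mem_insert]
      rintro (h | h)
      · exact hq0ne h
      · obtain ⟨q, hqA, heq⟩ := Finset.mem_image.mp h
        rw [hAdef, Finset.mem_filter] at hqA
        have hq' : invol n n' (i0, j0) = q := by
          rw [← heq, hff q hqA.1]
        rw [← hq'] at hqA
        exact hfq0notA hqA.2
    have hcardim : (A.image (invol n n')).card = A.card := by
      apply Finset.card_image_of_injOn
      intro a ha b hb h
      have haS : a ∈ S := (Finset.mem_filter.mp ha).1
      have hbS : b ∈ S := (Finset.mem_filter.mp hb).1
      exact hinjS a haS b hbS h
    have hcard2 : A.card + 2 ≤ B.card := by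
      have h1 := Finset.card_le_card hsub
      rw [Finset.card_insert_of_notMem hq0notim,
        Finset.card_insert_of_notMem hfq0notim, hcardim] at h1
      omega
    have heven : n * n' = 2 * (r * n') := by rw [hr]; ring
    omega
  · -- part (c): dt - dt' < -p
    intro ha
    have hq0A : (i0, j0) ∈ A := by
      rw [hAdef, Finset.mem_filter]
      refine ⟨hq0S, ?_⟩
      have := habs.2; linarith
    have hfq0c : β (invol n n' (i0, j0)).1 + dt < β' (invol n n' (i0, j0)).2 + dt' := by
      rw [hβq0, hβ'q0]; have := habs.1; linarith
    have hfq0A : invol n n' (i0, j0) ∈ A := by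
      rw [hAdef, Finset.mem_filter]; exact ⟨hfq0S, hfq0c⟩
    have himage : B.image (invol n n') ⊆ A := by
      intro q' hq'
      obtain ⟨q, hqB, rfl⟩ := Finset.mem_image.mp hq'
      rw [hBdef, Finset.mem_filter] at hqB
      obtain ⟨hqS, hqc⟩ := hqB
      rw [hAdef, Finset.mem_filter]
      refine ⟨hfS q hqS, ?_⟩
      rw [hβf q hqS, hβ'f q hqS]
      push_neg at hqc
      linarith
    have hsub : insert (i0, j0) (insert (invol n n' (i0, j0)) (B.image (invol n n'))) ⊆ A := by
      rw [Finset.insert_subset_iff, Finset.insert_subset_iff]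
      exact ⟨hq0A, hfq0A, himage⟩
    have hfq0notim : invol n n' (i0, j0) ∉ B.image (invol n n') := by
      intro h
      obtain ⟨q, hqB, heq⟩ := Finset.mem_image.mp h
      rw [hBdef, Finset.mem_filter] at hqB
      have : q = (i0, j0) := hinjS q hqB.1 _ hq0S heq
      rw [this] at hqB
      exact hqB.2 ((Finset.mem_filter.mp hq0A).2)
    have hq0notim : (i0, j0) ∉ insert (invol n n' (i0, j0)) (B.image (invol n n')) := by
      rw [Finset.mem_insert]
      rintro (h | h)
      · exact hq0ne h
      · obtain ⟨q, hqB, heq⟩ := Finset.mem_image.mp h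
        rw [hBdef, Finset.mem_filter] at hqB
        have hq' : invol n n' (i0, j0) = q := by
          rw [← heq, hff q hqB.1]
        rw [← hq'] at hqB
        exact hqB.2 hfq0c
    have hcardim : (B.image (invol n n')).card = B.card := by
      apply Finset.card_image_of_injOn
      intro a ha b hb h
      have haS : a ∈ S := (Finset.mem_filter.mp ha).1
      have hbS : b ∈ S := (Finset.mem_filter.mp hb).1
      exact hinjS a haS b hbS h
    have hcard2 : B.card + 2 ≤ A.card := by
      have h1 := Finset.card_le_card hsub
      rw [Finset.card_insert_of_notMem hq0notim,
        Finset.card_insert_of_notMem hfq0notim, hcardim] at h1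
      omega
    have heven : n * n' = 2 * (r * n') := by rw [hr]; ring
    omega
end

section
/- Let n, n' be odd positive integers and N = n + n'. Let μ = (μ_1,…,μ_n) ∈ ℤ^n and μ' = (μ'_1,…,μ'_{n'}) ∈ ℤ^{n'} be pure weights with abelian parts d = μ_{(n+1)/2} and d' = μ'_{(n'+1)/2} (the middle entries), and suppose d − d' = −N/2 — note this forces N even. Let ρ_N = ((N−1)/2, (N−3)/2, …, (1−N)/2) and let μ⊗μ' = (μ_1,…,μ_n,μ'_1,…,μ'_{n'}) ∈ (½ℤ)^N. Then the entries of μ⊗μ' + ρ_N at positions (n+1)/2 and n + (n'+1)/2 are equal; consequently there is no permutation w ∈ S_N such that w⁻¹(μ⊗μ' + ρ_N) is strictly decreasing, i.e. no w for which w⁻¹·(μ⊗μ') is a dominant weight. -/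
/-- Appendix 2, Proposition part (5): for `n`, `n'` odd and pure weights `μ`, `μ'`
with middle entries (abelian parts) `d`, `d'` satisfying `d − d' = −N/2`
(`N = n + n'`), the entries of `μ⊗μ' + ρ_N` at positions `(n+1)/2` and
`n + (n'+1)/2` coincide, so no permutation makes `μ⊗μ' + ρ_N` strictly
decreasing, i.e. no `w` with `w⁻¹·(μ⊗μ')` dominant. -/
theorem stmt_11 (n n' : ℕ) (hn : Odd n) (hn' : Odd n')
    (μ μ' : ℕ → ℤ)
    (hpure : ∀ i, 1 ≤ i → i ≤ n → μ i + μ (n + 1 - i) = 2 * μ ((n + 1) / 2))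
    (hpure' : ∀ j, 1 ≤ j → j ≤ n' →
      μ' j + μ' (n' + 1 - j) = 2 * μ' ((n' + 1) / 2))
    (hd : 2 * (μ ((n + 1) / 2) - μ' ((n' + 1) / 2)) = -((n : ℤ) + n'))
    (entry : ℕ → ℚ)
    (hentry : ∀ k, 1 ≤ k → k ≤ n + n' →
      entry k = (if k ≤ n then (μ k : ℚ) else (μ' (k - n) : ℚ))
        + (((n : ℚ) + n') + 1) / 2 - k) :
    entry ((n + 1) / 2) = entry (n + (n' + 1) / 2) ∧
    ¬ ∃ w : Equiv.Perm (Fin (n + n')), ∀ i j : Fin (n + n'), i < j →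
        entry ((w j : ℕ) + 1) < entry ((w i : ℕ) + 1) := by

  obtain ⟨k, hk⟩ := hn
  obtain ⟨k', hk'⟩ := hn'
  subst hk hk'
  have ha : (2 * k + 1 + 1) / 2 = k + 1 := by omega
  have hb : (2 * k' + 1 + 1) / 2 = k' + 1 := by omega
  rw [ha] at hd ⊢
  rw [hb] at hd ⊢
  have e1 := hentry (k + 1) (by omega) (by omega)
  have e2 := hentry (2 * k + 1 + (k' + 1)) (by omega) (by omega)
  rw [if_pos (by omega)] at e1
  rw [if_neg (by omega)] at e2
  have hsub : 2 * k + 1 + (k' + 1) - (2 * k + 1) = k' + 1 := by omega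
  rw [hsub] at e2
  have hdq : (2 : ℚ) * ((μ (k + 1) : ℚ) - (μ' (k' + 1) : ℚ))
      = -((2 * k + 1 : ℚ) + (2 * k' + 1 : ℚ)) := by
    exact_mod_cast congrArg (fun z : ℤ => (z : ℚ)) hd
  have heq : entry (k + 1) = entry (2 * k + 1 + (k' + 1)) := by
    rw [e1, e2]
    push_cast
    push_cast at hdq
    linarith
  refine ⟨heq, ?_⟩
  rintro ⟨w, hw⟩
  have hi : k < 2 * k + 1 + (2 * k' + 1) := by omega
  have hj : 2 * k + k' + 1 < 2 * k + 1 + (2 * k' + 1) := by omega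
  set i : Fin (2 * k + 1 + (2 * k' + 1)) := ⟨k, hi⟩
  set j : Fin (2 * k + 1 + (2 * k' + 1)) := ⟨2 * k + k' + 1, hj⟩
  have hij : w.symm i ≠ w.symm j := by
    intro h
    have : i = j := by
      have := congrArg w h
      simpa using this
    simp [i, j, Fin.ext_iff] at this
    omega
  have hwi : ((w (w.symm i) : ℕ)) + 1 = k + 1 := by simp [i]
  have hwj : ((w (w.symm j) : ℕ)) + 1 = 2 * k + 1 + (k' + 1) := by
    simp [j]; omega
  rcases lt_or_gt_of_ne hij with h | h
  · have := hw _ _ h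
    rw [hwi, hwj] at this
    exact absurd heq (by linarith)
  · have := hw _ _ h
    rw [hwi, hwj] at this
    exact absurd heq (by linarith)
end

section
/- Let N = n + n' and regard weights of the Levi GL_n × GL_{n'} as pairs; let ρ_N = ((N−1)/2, …, (1−N)/2) ∈ (½ℤ)^N. Define the twisted action of w ∈ S_N on λ ∈ ℤ^N by w·λ := w(λ + ρ_N) − ρ_N (where permutations act by permuting coordinates). Let w_N ∈ S_N be the longest element (w_N(i) = N+1−i), and w_M ∈ S_N the block-longest element (reversing {1,…,n} and {n+1,…,N} separately). Suppose w ∈ S_N and λ ∈ ℤ^N satisfy w·λ = (μ, μ') for μ ∈ ℤ^n, μ' ∈ ℤ^{n'}. Let λ^∨ := −w_N(λ) and for a block weight μ let μ^∨ := −w_n(μ) (reversal and negation). Then (w_M w w_N)·(λ^∨) = (μ^∨ − n'·𝟏_n, μ'^∨ + n·𝟏_{n'}), where 𝟏_m denotes the all-ones vector of length m. -/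
/-- Lemma on `w^∨`: with the twisted Weyl action `w·λ = w(λ + ρ_N) − ρ_N`
(permutations acting on vectors by `(σ v)_k = v_{σ⁻¹ k}`), if `w·λ = (μ, μ')`
then `(w_M w w_N)·(λ^∨) = (μ^∨ − n'·𝟏_n, μ'^∨ + n·𝟏_{n'})`, where `w_N` is the
longest element of `S_N`, `w_M` the block-longest element of the Levi,
`λ^∨ = −w_N(λ)` and `μ^∨`, `μ'^∨` the reversed negated block weights. -/
theorem stmt_18 (n n' : ℕ) (hn : 0 < n) (hn' : 0 < n')
    (lam : Fin (n + n') → ℤ) (μ μ' : ℕ → ℤ)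
    (w wN wM : Equiv.Perm (Fin (n + n')))
    (hwN : ∀ k : Fin (n + n'), (wN k : ℕ) = n + n' - 1 - (k : ℕ))
    (hwM : ∀ k : Fin (n + n'),
      (wM k : ℕ) = if (k : ℕ) < n then n - 1 - (k : ℕ)
        else 2 * n + n' - 1 - (k : ℕ))
    (ρ : Fin (n + n') → ℚ)
    (hρ : ∀ k : Fin (n + n'), ρ k = (((n : ℚ) + n') - 1) / 2 - (k : ℕ))
    (h : ∀ k : Fin (n + n'),
      (lam (w⁻¹ k) : ℚ) + ρ (w⁻¹ k) - ρ k
        = if (k : ℕ) < n then (μ (k : ℕ) : ℚ) else (μ' ((k : ℕ) - n) : ℚ)) :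
    ∀ k : Fin (n + n'),
      (-(lam (wN ((wM * w * wN)⁻¹ k))) : ℚ)
          + ρ ((wM * w * wN)⁻¹ k) - ρ k
        = if (k : ℕ) < n then (-(μ (n - 1 - (k : ℕ))) : ℚ) - (n' : ℚ)
          else (-(μ' (n' - 1 - ((k : ℕ) - n))) : ℚ) + (n : ℚ) := by
  have hNN : ∀ x : Fin (n + n'), wN (wN x) = x := by
    intro x
    have h1 := hwN x
    have h2 := hwN (wN x)
    have h3 := x.isLt
    have h4 := (wN x).isLt
    exact Fin.ext (by omega)
  have hMM : ∀ x : Fin (n + n'), wM (wM x) = x := by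
    intro x
    have h1 := hwM x
    have h2 := hwM (wM x)
    have h3 := x.isLt
    have h4 := (wM x).isLt
    refine Fin.ext ?_
    split_ifs at h1 h2 <;> omega
  have hinvN : ∀ x, wN⁻¹ x = wN x := by
    intro x
    conv_lhs => rw [← hNN x]
    rw [Equiv.Perm.inv_eq_iff_eq]
  have hinvM : ∀ x, wM⁻¹ x = wM x := by
    intro x
    conv_lhs => rw [← hMM x]
    rw [Equiv.Perm.inv_eq_iff_eq]
  have cast3 : ∀ a b : ℕ, b < a → ((a - 1 - b : ℕ) : ℚ) = (a : ℚ) - 1 - (b : ℚ) := by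
    intro a b hb
    have e : a - 1 - b = a - (1 + b) := by omega
    rw [e, Nat.cast_sub (by omega)]
    push_cast
    ring
  intro k
  set m := w⁻¹ (wM k) with hm
  have hj : (wM * w * wN)⁻¹ k = wN m := by
    rw [hm]
    simp [mul_inv_rev, Equiv.Perm.mul_apply, hinvM, hinvN]
  rw [hj, hNN]
  have key := h (wM k)
  rw [← hm] at key
  have hk := k.isLt
  have hmlt := m.isLt
  have hwMk := hwM k
  have hwNm := hwN m
  have ewN : (((wN m : ℕ)) : ℚ) = (n : ℚ) + n' - 1 - (m : ℕ) := by
    rw [hwNm, cast3 (n + n') m hmlt]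
    push_cast
    ring
  by_cases hkn : (k : ℕ) < n
  · have hv : (wM k : ℕ) = n - 1 - (k : ℕ) := by rw [hwMk, if_pos hkn]
    have hwkn : (wM k : ℕ) < n := by omega
    rw [if_pos hkn]
    rw [if_pos hwkn] at key
    simp only [hρ] at key ⊢
    rw [hv, cast3 n k hkn] at key
    rw [ewN]
    push_cast at key ⊢
    linarith [key]
  · have hv : (wM k : ℕ) = 2 * n + n' - 1 - (k : ℕ) := by rw [hwMk, if_neg hkn]
    have hwkn : ¬ (wM k : ℕ) < n := by omega
    have hidx : (wM k : ℕ) - n = n' - 1 - ((k : ℕ) - n) := by omega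
    rw [if_neg hkn]
    rw [if_neg hwkn, hidx] at key
    simp only [hρ] at key ⊢
    rw [hv, cast3 (2 * n + n') k (by omega)] at key
    rw [ewN]
    push_cast at key ⊢
    linarith [key]
end
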